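/- Let S₃(x₁,x₂,x₃) = x₁x₂x₃ + x₂x₃x₁ + x₃x₁x₂ − x₁x₃x₂ − x₃x₂x₁ − x₂x₁x₃. For any α ∈ ℂ, the full 3×3 Jordan block J = αI + N (with N the nilpotent matrix with ones on the superdiagonal) lies in the image of S₃ on M₃(ℂ)³. Explicitly, J = S₃(N, B, C) where B has rows (1,0,0), (1,0,0), (0,1,−1) and C = (1/2)·diag(α−1, −2, −α−1). -/

import Mathlib

open Matrix

/-- the full `3×3` Jordan block `αI + N` is an explicit value of the
standard polynomial `S₃`. -/
theorem jordan_block_in_image_S3 (α : ℂ)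
    (S3 : Matrix (Fin 3) (Fin 3) ℂ → Matrix (Fin 3) (Fin 3) ℂ → Matrix (Fin 3) (Fin 3) ℂ →
      Matrix (Fin 3) (Fin 3) ℂ)
    (hS3 : ∀ A B C, S3 A B C =
      A * B * C + B * C * A + C * A * B - A * C * B - C * B * A - B * A * C) :
    !![α, 1, 0; 0, α, 1; 0, 0, α] =
      S3 !![0, 1, 0; 0, 0, 1; 0, 0, 0] !![1, 0, 0; 1, 0, 0; 0, 1, -1]
        ((1 / 2 : ℂ) • !![α - 1, 0, 0; 0, -2, 0; 0, 0, -α - 1]) := by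
  have h : (1 / 2 : ℂ) • !![α - 1, 0, 0; 0, -2, 0; 0, 0, -α - 1]
      = !![(α - 1)/2, 0, 0; 0, -1, 0; 0, 0, (-α - 1)/2] := by
    simp [Matrix.smul_of, Matrix.smul_cons, Matrix.smul_empty]
    ring_nf
    exact ⟨trivial, trivial⟩
  rw [hS3, h]
  simp [Matrix.mul_fin_three]
  constructor <;> ring
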